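/- Every almost-Riordan array factors as a semidirect-type product: (d | g, f) = [d, tg] · (1 | 1, f), i.e., the product of the quasi-Riordan array [d, tg] with the almost-Riordan array (1 | 1, f) equals (d | g, f). -/

import Mathlib

open PowerSeries

/-- Column generating functions `(d, tg, tgf, tgf², …)` of the almost-Riordan
array `(d | g, f)`. -/
noncomputable def arCol {K : Type*} [Field K] (d g f : PowerSeries K) : ℕ → PowerSeries K
  | 0 => d
  | k + 1 => X * g * f ^ k

/-- Column generating functions `(d, tg, t·tg, t²·tg, …)` of the quasi-Riordan
array `[d, tg]`. -/
noncomputable def qtgCol {K : Type*} [Field K] (d g : PowerSeries K) : ℕ → PowerSeries K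
  | 0 => d
  | k + 1 => X ^ k * (X * g)

/-- Column generating functions `(1, t, tf, tf², …)` of the almost-Riordan
array `(1 | 1, f)`. -/
noncomputable def oneCol {K : Type*} [Field K] (f : PowerSeries K) : ℕ → PowerSeries K
  | 0 => 1
  | k + 1 => X * f ^ k

/-- Every almost-Riordan array factors as `(d | g, f) = [d, tg]·(1 | 1, f)`,
as a product of the corresponding lower-triangular matrices. -/
theorem almost_riordan_factorization {K : Type*} [Field K] [CharZero K]
    (d g f : PowerSeries K)
    (hd : constantCoeff d ≠ 0) (hg : constantCoeff g ≠ 0)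
    (hf0 : constantCoeff f = 0) (hf1 : coeff 1 f ≠ 0) :
    ∀ n k : ℕ, coeff n (arCol d g f k) =
      ∑ j ∈ Finset.range (n + 1),
        coeff n (qtgCol d g j) * coeff j (oneCol f k) := by
  intro n k
  cases k with
  | zero =>
    rw [Finset.sum_eq_single 0]
    · simp [arCol, qtgCol, oneCol]
    · rintro (_ | j) _ hj
      · exact absurd rfl hj
      · simp [oneCol, coeff_one]
    · intro h; exact absurd (Finset.mem_range.mpr n.succ_pos) h
  | succ k =>
    rw [Finset.sum_range_succ']
    have h0 : (coeff 0) (oneCol f (k + 1)) = 0 := by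
      simp [oneCol, coeff_zero_eq_constantCoeff]
    rw [h0, mul_zero, add_zero]
    have hterm : ∀ i, qtgCol d g (i + 1) = X ^ (i + 1) * g := by
      intro i; simp [qtgCol, pow_succ]; ring
    cases n with
    | zero => simp [arCol, coeff_zero_eq_constantCoeff, hf0]
    | succ m =>
      have hL : (coeff (m + 1)) (arCol d g f (k + 1)) = coeff m (g * f ^ k) := by
        simp only [arCol, mul_assoc]
        exact coeff_succ_X_mul m _
      rw [hL, mul_comm g (f ^ k), coeff_mul,
        Finset.Nat.sum_antidiagonal_eq_sum_range_succ
          (fun a b => coeff a (f ^ k) * coeff b g) m]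
      refine Finset.sum_congr rfl fun i hi => ?_
      rw [Finset.mem_range] at hi
      have hi' : i ≤ m := Nat.lt_succ_iff.mp hi
      have h1 : (coeff (m + 1)) (qtgCol d g (i + 1)) = coeff (m - i) g := by
        rw [hterm, coeff_X_pow_mul']
        rw [if_pos (by omega)]
        rw [Nat.succ_sub_succ]
      have h2 : (coeff (i + 1)) (oneCol f (k + 1)) = coeff i (f ^ k) := by
        simp only [oneCol]
        exact coeff_succ_X_mul i _
      rw [h1, h2, mul_comm]
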